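/- arXiv:2406.04020 — 2 statements merged into one kernel-verified Lean document; each statement's English description precedes it below -/
import Mathlib

section
/- For arbitrary graphs G and H, ρ_e^o(G)·α(H) ≤ ρ_e^o(G ∘ H) ≤ ρ_e^o(G)·α(H) + ρ_e^o(H)·(α(G) − ρ_e^o(G)). -/
open SimpleGraph

/-- An edge open packing (EOP) set: a set `B` of edges of `G` such that no edge of `G`
(other than the two edges themselves) joins an endvertex of one edge of `B` to an
endvertex of another edge of `B`. -/
def IsEOPSet {V : Type*} (G : SimpleGraph V) (B : Set (Sym2 V)) : Prop :=
  B ⊆ G.edgeSet ∧ ∀ e₁ ∈ B, ∀ e₂ ∈ B, e₁ ≠ e₂ →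
    ∀ x ∈ e₁, ∀ y ∈ e₂, G.Adj x y → s(x, y) = e₁ ∨ s(x, y) = e₂

/-- An induced matching: a set `M` of edges of `G` such that no edge of `G` joins an
endvertex of one edge of `M` to an endvertex of another edge of `M` (this in particular
forces `M` to be a matching). -/
def IsInducedMatching {V : Type*} (G : SimpleGraph V) (M : Set (Sym2 V)) : Prop :=
  M ⊆ G.edgeSet ∧ ∀ e₁ ∈ M, ∀ e₂ ∈ M, e₁ ≠ e₂ →
    ∀ x ∈ e₁, ∀ y ∈ e₂, ¬ G.Adj x y

/-- The edge open packing number `ρₑᵒ(G)`. -/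
noncomputable def eopNum {V : Type*} (G : SimpleGraph V) : ℕ :=
  sSup {n | ∃ B : Finset (Sym2 V), IsEOPSet G ↑B ∧ B.card = n}

/-- The induced matching number `ν_I(G)`. -/
noncomputable def inducedMatchingNum {V : Type*} (G : SimpleGraph V) : ℕ :=
  sSup {n | ∃ M : Finset (Sym2 V), IsInducedMatching G ↑M ∧ M.card = n}

/-- The independence number `α(G)`. -/
noncomputable def indepNum {V : Type*} (G : SimpleGraph V) : ℕ :=
  sSup {n | ∃ S : Finset V, (∀ x ∈ S, ∀ y ∈ S, ¬ G.Adj x y) ∧ S.card = n}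

/-- The open packing number `ρᵒ(G)`: maximum size of a set of vertices whose open
neighborhoods are pairwise disjoint. -/
noncomputable def openPackNum {V : Type*} (G : SimpleGraph V) : ℕ :=
  sSup {n | ∃ P : Finset V,
    (∀ x ∈ P, ∀ y ∈ P, x ≠ y → ∀ z, ¬ (G.Adj x z ∧ G.Adj y z)) ∧ P.card = n}

/-- The 2-packing number `ρ₂(G)`: maximum size of a set of vertices pairwise at
distance greater than 2. -/
noncomputable def twoPackNum {V : Type*} (G : SimpleGraph V) : ℕ :=
  sSup {n | ∃ P : Finset V,
    (∀ x ∈ P, ∀ y ∈ P, x ≠ y →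
      ¬ G.Adj x y ∧ (∀ z, ¬ (G.Adj x z ∧ G.Adj z y))) ∧ P.card = n}

/-- The 3-packing number `ρ₃(G)`: maximum size of a set of vertices pairwise at
distance greater than 3. -/
noncomputable def threePackNum {V : Type*} (G : SimpleGraph V) : ℕ :=
  sSup {n | ∃ P : Finset V,
    (∀ x ∈ P, ∀ y ∈ P, x ≠ y →
      ¬ G.Adj x y ∧ (∀ z, ¬ (G.Adj x z ∧ G.Adj z y)) ∧
      (∀ z w, ¬ (G.Adj x z ∧ G.Adj z w ∧ G.Adj w y))) ∧ P.card = n}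

/-- Minimum degree of `G` (degrees measured via `Set.ncard` of neighborhoods). -/
noncomputable def minDeg {V : Type*} (G : SimpleGraph V) : ℕ :=
  sInf {d | ∃ v, d = (G.neighborSet v).ncard}

/-- The lexicographic product `G ∘ H`. -/
def lexProd {V W : Type*} (G : SimpleGraph V) (H : SimpleGraph W) :
    SimpleGraph (V × W) where
  Adj x y := G.Adj x.1 y.1 ∨ (x.1 = y.1 ∧ H.Adj x.2 y.2)
  symm := ⟨by
    rintro ⟨g, h⟩ ⟨g', h'⟩ (hgg | ⟨rfl, hh⟩)
    · exact Or.inl hgg.symm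
    · exact Or.inr ⟨rfl, hh.symm⟩⟩
  loopless := ⟨by
    rintro ⟨g, h⟩ (hgg | ⟨-, hh⟩)
    · exact G.loopless.irrefl g hgg
    · exact H.loopless.irrefl h hh⟩

/-- The direct (tensor) product `G × H`. -/
def tensorProd {V W : Type*} (G : SimpleGraph V) (H : SimpleGraph W) :
    SimpleGraph (V × W) where
  Adj x y := G.Adj x.1 y.1 ∧ H.Adj x.2 y.2
  symm := ⟨by rintro ⟨g, h⟩ ⟨g', h'⟩ ⟨h1, h2⟩; exact ⟨h1.symm, h2.symm⟩⟩
  loopless := ⟨by rintro ⟨g, h⟩ ⟨h1, -⟩; exact G.loopless.irrefl g h1⟩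

/-- The strong product `G ⊠ H`. -/
def strongProd {V W : Type*} (G : SimpleGraph V) (H : SimpleGraph W) :
    SimpleGraph (V × W) where
  Adj x y := x ≠ y ∧ (x.1 = y.1 ∨ G.Adj x.1 y.1) ∧ (x.2 = y.2 ∨ H.Adj x.2 y.2)
  symm := ⟨by
    rintro x y ⟨hne, h1, h2⟩
    exact ⟨hne.symm, h1.imp Eq.symm (fun h => h.symm), h2.imp Eq.symm (fun h => h.symm)⟩⟩
  loopless := ⟨by rintro x ⟨hne, -, -⟩; exact hne rfl⟩

/-- The star `K_{1,r}` with center `none` and leaves `some i`. -/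
def starGraph (r : ℕ) : SimpleGraph (Option (Fin r)) :=
  SimpleGraph.fromRel (fun x _ => x = none)

/-- The spider `S^k`: obtained from `K_{1,k}` by subdividing every edge exactly once.
The center is `none`, `some (i, false)` are the support vertices and `some (i, true)`
the leaves. -/
def spiderGraph (k : ℕ) : SimpleGraph (Option (Fin k × Bool)) :=
  SimpleGraph.fromRel (fun x y =>
    (x = none ∧ ∃ i, y = some (i, false)) ∨
    (∃ i, x = some (i, false) ∧ y = some (i, true)))

/-- The `n`-dimensional hypercube `Q_n`: vertices are `Fin n → Bool`, adjacent iff they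
differ in exactly one coordinate. -/
def hypercube (n : ℕ) : SimpleGraph (Fin n → Bool) :=
  SimpleGraph.fromRel (fun x y =>
    (Finset.univ.filter (fun i => x i ≠ y i)).card = 1)

/-- The corona product `G ⊙ H`: vertices `(v, none)` form a copy of `G`, vertices
`(v, some h)` form a copy of `H` for each `v`, and `(v, none)` is joined to every
vertex of its copy of `H`. -/
def corona {V W : Type*} (G : SimpleGraph V) (H : SimpleGraph W) :
    SimpleGraph (V × Option W) :=
  SimpleGraph.fromRel (fun x y =>
    (x.2 = none ∧ y.2 = none ∧ G.Adj x.1 y.1) ∨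
    (x.1 = y.1 ∧ ∃ h h', x.2 = some h ∧ y.2 = some h' ∧ H.Adj h h') ∨
    (x.1 = y.1 ∧ x.2 = none ∧ ∃ h, y.2 = some h))

/-- The set of endvertices of the edges of `B`. -/
def supportSet {V : Type*} (B : Set (Sym2 V)) : Set V := {v | ∃ e ∈ B, v ∈ e}

section MyHelpers
variable {V W : Type*}

lemma sym2_eq_of_mem_mem {e : Sym2 V} {a b : V} (hab : a ≠ b) (ha : a ∈ e) (hb : b ∈ e) :
    e = s(a, b) := (Sym2.mem_and_mem_iff hab).mp ⟨ha, hb⟩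

lemma sym2_decomp (e : Sym2 V) : ∃ p : V × V, e = s(p.1, p.2) := by
  induction e using Sym2.ind with | _ x y => exact ⟨(x, y), rfl⟩

lemma eop_no_path {G : SimpleGraph V} {B : Set (Sym2 V)} (hB : IsEOPSet G B)
    {e f g : Sym2 V} (he : e ∈ B) (hf : f ∈ B) (hg : g ∈ B) (hfe : f ≠ e) (hge : g ≠ e)
    {a b : V} (ha : a ∈ e) (hb : b ∈ e) (hab : a ≠ b) (haf : a ∈ f) (hbg : b ∈ g) : False := by
  have heab : e = s(a, b) := sym2_eq_of_mem_mem hab ha hb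
  have hadj : G.Adj a b := by
    have := hB.1 he; rwa [heab, SimpleGraph.mem_edgeSet] at this
  by_cases hfg : f = g
  · subst hfg
    exact hfe ((sym2_eq_of_mem_mem hab haf hbg).trans heab.symm)
  · rcases hB.2 f hf g hg hfg a haf b hbg hadj with h | h
    · exact hfe (h ▸ heab).symm
    · exact hge (h ▸ heab).symm

lemma eop_center {G : SimpleGraph V} {B : Set (Sym2 V)} (hB : IsEOPSet G B) :
    ∃ c l : Sym2 V → V, ∀ e ∈ B, e = s(c e, l e) ∧ c e ≠ l e ∧
      ∀ f ∈ B, f ≠ e → ∀ v ∈ e, v ∈ f → v = c e := by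
  classical
  choose p hp using sym2_decomp (V := V)
  refine ⟨fun e => if (∃ f ∈ B, f ≠ e ∧ (p e).1 ∈ f) then (p e).1 else (p e).2,
          fun e => if (∃ f ∈ B, f ≠ e ∧ (p e).1 ∈ f) then (p e).2 else (p e).1, ?_⟩
  intro e he
  have h1 : (p e).1 ∈ e := by
    have := Sym2.mem_mk_left (p e).1 (p e).2; rwa [← hp e] at this
  have h2 : (p e).2 ∈ e := by
    have := Sym2.mem_mk_right (p e).1 (p e).2; rwa [← hp e] at this
  have hne : (p e).1 ≠ (p e).2 := by
    intro h
    have := hB.1 he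
    rw [hp e, SimpleGraph.mem_edgeSet, h] at this
    exact G.loopless.irrefl _ this
  by_cases hc : ∃ f ∈ B, f ≠ e ∧ (p e).1 ∈ f
  · simp only [hc, if_pos]
    refine ⟨hp e, hne, ?_⟩
    intro f hf hfe v hv hvf
    rw [hp e, Sym2.mem_iff] at hv
    rcases hv with rfl | rfl
    · rfl
    · obtain ⟨f', hf', hf'e, hmem⟩ := hc
      exact absurd (eop_no_path hB he hf' hf hf'e hfe h1 h2 hne hmem hvf) (fun h => h)
  · simp only [hc, if_neg, if_false]
    refine ⟨(hp e).trans (Sym2.eq_swap), fun h => hne h.symm, ?_⟩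
    intro f hf hfe v hv hvf
    rw [hp e, Sym2.mem_iff] at hv
    rcases hv with rfl | rfl
    · exact absurd ⟨f, hf, hfe, hvf⟩ hc
    · rfl

end MyHelpers
section MyHelpers2
variable {V W : Type*}

lemma le_eopNum [Fintype V] {G : SimpleGraph V} {B : Finset (Sym2 V)}
    (hB : IsEOPSet G ↑B) : B.card ≤ eopNum G := by
  classical
  apply le_csSup
  · exact ⟨Fintype.card (Sym2 V), fun n hn => by
      obtain ⟨B', _, rfl⟩ := hn
      exact (Finset.card_le_univ B').trans (le_of_eq (Finset.card_univ))⟩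
  · exact ⟨B, hB, rfl⟩

lemma eopNum_exists [Fintype V] (G : SimpleGraph V) :
    ∃ B : Finset (Sym2 V), IsEOPSet G ↑B ∧ B.card = eopNum G := by
  classical
  have hne : Set.Nonempty {n | ∃ B : Finset (Sym2 V), IsEOPSet G ↑B ∧ B.card = n} := by
    refine ⟨0, ∅, ⟨?_, ?_⟩, rfl⟩
    · simp
    · simp
  have hbdd : BddAbove {n | ∃ B : Finset (Sym2 V), IsEOPSet G ↑B ∧ B.card = n} :=
    ⟨Fintype.card (Sym2 V), fun n hn => by
      obtain ⟨B', _, rfl⟩ := hn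
      exact (Finset.card_le_univ B').trans (le_of_eq (Finset.card_univ))⟩
  exact Nat.sSup_mem hne hbdd

lemma le_indepNum [Fintype V] {G : SimpleGraph V} {S : Finset V}
    (hS : ∀ x ∈ S, ∀ y ∈ S, ¬ G.Adj x y) : S.card ≤ _root_.indepNum G := by
  apply le_csSup
  · exact ⟨Fintype.card V, fun n hn => by
      obtain ⟨S', _, rfl⟩ := hn
      exact (Finset.card_le_univ S').trans (le_of_eq (Finset.card_univ))⟩
  · exact ⟨S, hS, rfl⟩

lemma indepNum_exists [Fintype V] (G : SimpleGraph V) :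
    ∃ S : Finset V, (∀ x ∈ S, ∀ y ∈ S, ¬ G.Adj x y) ∧ S.card = _root_.indepNum G := by
  have hne : Set.Nonempty {n | ∃ S : Finset V, (∀ x ∈ S, ∀ y ∈ S, ¬ G.Adj x y) ∧ S.card = n} :=
    ⟨0, ∅, by simp, rfl⟩
  have hbdd : BddAbove {n | ∃ S : Finset V, (∀ x ∈ S, ∀ y ∈ S, ¬ G.Adj x y) ∧ S.card = n} :=
    ⟨Fintype.card V, fun n hn => by
      obtain ⟨S', _, rfl⟩ := hn
      exact (Finset.card_le_univ S').trans (le_of_eq (Finset.card_univ))⟩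
  exact Nat.sSup_mem hne hbdd

lemma eop_indep [Fintype V] {G : SimpleGraph V} {B : Finset (Sym2 V)}
    (hB : IsEOPSet G ↑B) :
    ∃ S : Finset V, (∀ x ∈ S, ∀ y ∈ S, ¬ G.Adj x y) ∧ S.card = B.card ∧
      ∀ v ∈ S, ∃ e ∈ B, v ∈ e := by
  classical
  obtain ⟨c, l, hcl⟩ := eop_center hB
  have hlmem : ∀ e ∈ B, l e ∈ e := by
    intro e he
    have h := Sym2.mem_mk_right (c e) (l e)
    rwa [← (hcl e (by exact_mod_cast he)).1] at h
  have hlnot : ∀ e ∈ B, ∀ f ∈ B, f ≠ e → l e ∉ f := by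
    intro e he f hf hfe hmem
    have := (hcl e (by exact_mod_cast he)).2.2 f (by exact_mod_cast hf) hfe (l e) (hlmem e he) hmem
    exact (hcl e (by exact_mod_cast he)).2.1 this.symm
  have hinj : Set.InjOn l ↑B := by
    intro e₁ h₁ e₂ h₂ heq
    by_contra hne
    exact hlnot e₁ (by exact_mod_cast h₁) e₂ (by exact_mod_cast h₂) (fun h => hne h.symm)
      (heq ▸ hlmem e₂ (by exact_mod_cast h₂))
  refine ⟨B.image l, ?_, by rw [Finset.card_image_of_injOn hinj], ?_⟩
  · intro x hx y hy hadj
    obtain ⟨e₁, h₁, rfl⟩ := Finset.mem_image.mp hx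
    obtain ⟨e₂, h₂, rfl⟩ := Finset.mem_image.mp hy
    by_cases hee : e₁ = e₂
    · subst hee; exact G.loopless.irrefl _ hadj
    · rcases hB.2 e₁ (by exact_mod_cast h₁) e₂ (by exact_mod_cast h₂) hee
        (l e₁) (hlmem e₁ h₁) (l e₂) (hlmem e₂ h₂) hadj with h | h
      · exact hlnot e₂ h₂ e₁ h₁ hee (h ▸ Sym2.mem_mk_right _ _)
      · exact hlnot e₁ h₁ e₂ h₂ (fun hh => hee hh.symm) (h ▸ Sym2.mem_mk_left _ _)
  · intro v hv
    obtain ⟨e, he, rfl⟩ := Finset.mem_image.mp hv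
    exact ⟨e, he, hlmem e he⟩

lemma eopNum_le_indepNum [Fintype V] (G : SimpleGraph V) : eopNum G ≤ _root_.indepNum G := by
  obtain ⟨B, hB, hBc⟩ := eopNum_exists G
  obtain ⟨S, hS, hSc, _⟩ := eop_indep hB
  rw [← hBc, ← hSc]
  exact le_indepNum hS

end MyHelpers2
section LowerBound
variable {V W : Type*}

lemma lexProd_adj {G : SimpleGraph V} {H : SimpleGraph W} {x y : V × W} :
    (lexProd G H).Adj x y ↔ G.Adj x.1 y.1 ∨ (x.1 = y.1 ∧ H.Adj x.2 y.2) := Iff.rfl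

lemma lower_bound [Fintype V] [Fintype W] (G : SimpleGraph V) (H : SimpleGraph W) :
    eopNum G * _root_.indepNum H ≤ eopNum (lexProd G H) := by
  classical
  obtain ⟨B, hB, hBc⟩ := eopNum_exists G
  obtain ⟨S, hS, hSc⟩ := indepNum_exists H
  rcases S.eq_empty_or_nonempty with rfl | ⟨h₀, hh₀⟩
  · rw [← hSc]; simp
  obtain ⟨c, l, hcl⟩ := eop_center hB
  have hmemc : ∀ e ∈ B, c e ∈ e := by
    intro e he
    have h := Sym2.mem_mk_left (c e) (l e)
    rwa [← (hcl e (by exact_mod_cast he)).1] at h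
  have hmeml : ∀ e ∈ B, l e ∈ e := by
    intro e he
    have h := Sym2.mem_mk_right (c e) (l e)
    rwa [← (hcl e (by exact_mod_cast he)).1] at h
  set f : Sym2 V × W → Sym2 (V × W) := fun p => s((c p.1, h₀), (l p.1, p.2)) with hf
  have hinj : Set.InjOn f ↑(B ×ˢ S) := by
    rintro ⟨e, h⟩ hp ⟨e', h'⟩ hp' heq
    simp only [Finset.coe_product, Set.mem_prod, Finset.mem_coe, Finset.mem_product] at hp hp'
    obtain ⟨he, _⟩ := hp
    obtain ⟨he', _⟩ := hp'
    simp only [hf, Sym2.eq_iff, Prod.mk.injEq] at heq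
    rcases heq with ⟨⟨hc1, _⟩, hl1, hh1⟩ | ⟨⟨hc1, hh1⟩, hl1, hh2⟩
    · have hee : e = e' := by
        rw [(hcl e (by exact_mod_cast he)).1, (hcl e' (by exact_mod_cast he')).1, hc1, hl1]
      simp [hee, hh1]
    · have hee : e = e' := by
        rw [(hcl e (by exact_mod_cast he)).1, (hcl e' (by exact_mod_cast he')).1]
        rw [hc1, hl1, Sym2.eq_swap]
      exfalso
      apply (hcl e (by exact_mod_cast he)).2.1
      rw [hc1, ← hee]
  have hEOP : IsEOPSet (lexProd G H) ↑((B ×ˢ S).image f) := by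
    constructor
    · intro eE heE
      simp only [Finset.coe_image, Set.mem_image, Finset.mem_coe, Finset.mem_product] at heE
      obtain ⟨⟨e, h⟩, ⟨he, hh⟩, rfl⟩ := heE
      rw [SimpleGraph.mem_edgeSet, lexProd_adj]
      left
      have := hB.1 (by exact_mod_cast he)
      rwa [(hcl e (by exact_mod_cast he)).1, SimpleGraph.mem_edgeSet] at this
    · intro eE₁ heE₁ eE₂ heE₂ hne x hx y hy hadj
      simp only [Finset.coe_image, Set.mem_image, Finset.mem_coe, Finset.mem_product] at heE₁ heE₂
      obtain ⟨⟨e, h⟩, ⟨he, hh⟩, rfl⟩ := heE₁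
      obtain ⟨⟨e', h'⟩, ⟨he', hh'⟩, rfl⟩ := heE₂
      -- second coordinates of all endpoints are in S
      have hxS : x.2 ∈ S := by
        simp only [hf, Sym2.mem_iff] at hx
        rcases hx with rfl | rfl <;> simpa
      have hyS : y.2 ∈ S := by
        simp only [hf, Sym2.mem_iff] at hy
        rcases hy with rfl | rfl <;> simpa
      have hGadj : G.Adj x.1 y.1 := by
        rcases lexProd_adj.mp hadj with h | ⟨_, hH⟩
        · exact h
        · exact absurd hH (hS _ hxS _ hyS)
      have hx1 : x.1 ∈ e := by
        simp only [hf, Sym2.mem_iff] at hx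
        rcases hx with rfl | rfl
        · exact hmemc e he
        · exact hmeml e he
      have hy1 : y.1 ∈ e' := by
        simp only [hf, Sym2.mem_iff] at hy
        rcases hy with rfl | rfl
        · exact hmemc e' he'
        · exact hmeml e' he'
      by_cases hee : e = e'
      · subst hee
        -- x.1 ≠ y.1 so {x.1, y.1} = {c e, l e}
        have hxy1 : x.1 ≠ y.1 := G.ne_of_adj hGadj
        simp only [hf, Sym2.mem_iff] at hx hy
        rcases hx with rfl | rfl <;> rcases hy with rfl | rfl
        · exact absurd rfl hxy1
        · right; rfl
        · left; rw [Sym2.eq_swap]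
        · exact absurd rfl hxy1
      · rcases hB.2 e (by exact_mod_cast he) e' (by exact_mod_cast he') hee
          x.1 hx1 y.1 hy1 hGadj with hs | hs
        · -- s(x.1, y.1) = e : y.1 is shared between e and e'
          have hy1e : y.1 ∈ e := hs ▸ Sym2.mem_mk_right _ _
          have hyc' : y.1 = c e' :=
            (hcl e' (by exact_mod_cast he')).2.2 e (by exact_mod_cast he) hee y.1 hy1 hy1e
          have hyc : y.1 = c e :=
            (hcl e (by exact_mod_cast he)).2.2 e' (by exact_mod_cast he')
              (fun hq => hee hq.symm) y.1 hy1e hy1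
          have hy'' : y = (c e', h₀) := by
            simp only [hf, Sym2.mem_iff] at hy
            rcases hy with rfl | rfl
            · rfl
            · exact absurd hyc'.symm (hcl e' (by exact_mod_cast he')).2.1
          have hx'' : x = (l e, h) := by
            simp only [hf, Sym2.mem_iff] at hx
            rcases hx with rfl | rfl
            · exfalso; exact G.ne_of_adj hGadj (by rw [hyc])
            · rfl
          left
          have hcc : c e' = c e := hyc'.symm.trans hyc
          rw [hx'', hy'', hcc, Sym2.eq_swap]
        · -- s(x.1, y.1) = e' : x.1 is shared
          have hx1e' : x.1 ∈ e' := hs ▸ Sym2.mem_mk_left _ _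
          have hxc : x.1 = c e :=
            (hcl e (by exact_mod_cast he)).2.2 e' (by exact_mod_cast he')
              (fun hq => hee hq.symm) x.1 hx1 hx1e'
          have hxc' : x.1 = c e' :=
            (hcl e' (by exact_mod_cast he')).2.2 e (by exact_mod_cast he) hee x.1 hx1e' hx1
          have hx'' : x = (c e, h₀) := by
            simp only [hf, Sym2.mem_iff] at hx
            rcases hx with rfl | rfl
            · rfl
            · exact absurd hxc.symm (hcl e (by exact_mod_cast he)).2.1
          have hy'' : y = (l e', h') := by
            simp only [hf, Sym2.mem_iff] at hy
            rcases hy with rfl | rfl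
            · exfalso; exact G.ne_of_adj hGadj (by rw [hxc'])
            · rfl
          right
          have hcc : c e = c e' := hxc.symm.trans hxc'
          rw [hx'', hy'', hcc]
  calc eopNum G * _root_.indepNum H = B.card * S.card := by rw [hBc, hSc]
    _ = ((B ×ˢ S).image f).card := by
        rw [Finset.card_image_of_injOn hinj, Finset.card_product]
    _ ≤ eopNum (lexProd G H) := le_eopNum hEOP

end LowerBound
section UpperBound
variable {V W : Type*}

lemma horiz_decomp {g g' : V} (hgg : g ≠ g') {E : Sym2 (V × W)}
    (hpi : Sym2.map Prod.fst E = s(g, g')) :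
    ∃ a b, E = s((g, a), (g', b)) := by
  obtain ⟨p, hp⟩ := sym2_decomp E
  rw [hp, Sym2.map_pair_eq, Sym2.eq_iff] at hpi
  rcases hpi with ⟨h1, h2⟩ | ⟨h1, h2⟩
  · exact ⟨p.1.2, p.2.2, by rw [hp, ← h1, ← h2]⟩
  · exact ⟨p.2.2, p.1.2, by rw [hp, ← h1, ← h2, Sym2.eq_swap]⟩

lemma upper_bound [Fintype V] [Fintype W] (G : SimpleGraph V) (H : SimpleGraph W) :
    eopNum (lexProd G H) ≤ eopNum G * _root_.indepNum H + eopNum H * (_root_.indepNum G - eopNum G) := by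
  classical
  obtain ⟨B, hB, hBc⟩ := eopNum_exists (lexProd G H)
  rw [← hBc]
  rcases B.eq_empty_or_nonempty with rfl | ⟨E₀, hE₀B⟩
  · simp
  obtain ⟨p0, hp0⟩ := sym2_decomp E₀
  set Bh : Finset (Sym2 (V × W)) :=
    B.filter (fun E => ¬ (Sym2.map Prod.fst E).IsDiag) with hBh
  set Bv : Finset (Sym2 (V × W)) :=
    B.filter (fun E => (Sym2.map Prod.fst E).IsDiag) with hBv
  have hsplit : Bv.card + Bh.card = B.card := by
    rw [hBh, hBv]
    exact Finset.card_filter_add_card_filter_not _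
  have hBhB : ∀ E ∈ Bh, E ∈ B := fun E hE => (Finset.mem_filter.mp hE).1
  have hBvB : ∀ E ∈ Bv, E ∈ B := fun E hE => (Finset.mem_filter.mp hE).1
  set C : Finset (Sym2 V) := Bh.image (Sym2.map Prod.fst) with hC
  -- C is an EOP set of G
  have hCedge : ∀ E ∈ Bh, Sym2.map Prod.fst E ∈ G.edgeSet := by
    intro E hE
    obtain ⟨hEB, hEh⟩ := Finset.mem_filter.mp hE
    obtain ⟨p, hp⟩ := sym2_decomp E
    have hedge := hB.1 (show E ∈ ↑B from hEB)
    rw [hp, SimpleGraph.mem_edgeSet] at hedge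
    rw [hp, Sym2.map_pair_eq, Sym2.mk_isDiag_iff] at hEh
    rw [hp, Sym2.map_pair_eq, SimpleGraph.mem_edgeSet]
    rcases hedge with h | ⟨h1, _⟩
    · exact h
    · exact absurd h1 hEh
  have hCEOP : IsEOPSet G ↑C := by
    constructor
    · intro e he
      simp only [hC, Finset.coe_image, Set.mem_image, Finset.mem_coe] at he
      obtain ⟨E, hE, rfl⟩ := he
      exact hCedge E hE
    · intro e₁ he₁ e₂ he₂ hne u hu v hv hadj
      simp only [hC, Finset.coe_image, Set.mem_image, Finset.mem_coe] at he₁ he₂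
      obtain ⟨E₁, hE₁, rfl⟩ := he₁
      obtain ⟨E₂, hE₂, rfl⟩ := he₂
      obtain ⟨x, hx, hxu⟩ := Sym2.mem_map.mp hu
      obtain ⟨y, hy, hyv⟩ := Sym2.mem_map.mp hv
      have hEne : E₁ ≠ E₂ := fun h => hne (by rw [h])
      have hadj' : (lexProd G H).Adj x y := Or.inl (by rw [hxu, hyv]; exact hadj)
      rcases hB.2 E₁ (by exact_mod_cast hBhB E₁ hE₁) E₂ (by exact_mod_cast hBhB E₂ hE₂)
        hEne x hx y hy hadj' with h | h
      · left; rw [← h, Sym2.map_pair_eq, hxu, hyv]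
      · right; rw [← h, Sym2.map_pair_eq, hxu, hyv]
  -- horizontal part bounded by |C| * α(H)
  have hBhcard : Bh.card ≤ C.card * _root_.indepNum H := by
    have hmaps : ∀ E ∈ Bh, Sym2.map Prod.fst E ∈ C :=
      fun E hE => Finset.mem_image_of_mem _ hE
    rw [Finset.card_eq_sum_card_fiberwise hmaps]
    refine le_trans (Finset.sum_le_card_nsmul C _ (_root_.indepNum H) ?_) (by rw [smul_eq_mul])
    intro e heC
    set Fe := Bh.filter (fun a => Sym2.map Prod.fst a = e) with hFe
    rcases Fe.eq_empty_or_nonempty with hemp | ⟨Ea, hEa⟩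
    · rw [hemp]; simp
    obtain ⟨hEah, hEae⟩ := Finset.mem_filter.mp hEa
    have hnd : ¬ e.IsDiag := by rw [← hEae]; exact (Finset.mem_filter.mp hEah).2
    obtain ⟨pg, hpg⟩ := sym2_decomp e
    have hgg : pg.1 ≠ pg.2 := by rwa [hpg, Sym2.mk_isDiag_iff] at hnd
    have hGgg : G.Adj pg.1 pg.2 := by
      have := hCEOP.1 (show e ∈ ↑C from by exact_mod_cast heC)
      rwa [hpg, SimpleGraph.mem_edgeSet] at this
    have hdec0 : ∀ E : Sym2 (V × W), ∃ q : W × W, E ∈ Fe → E = s((pg.1, q.1), (pg.2, q.2)) := by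
      intro E
      by_cases hEF : E ∈ Fe
      · obtain ⟨a, b, hab⟩ := horiz_decomp hgg (show Sym2.map Prod.fst E = s(pg.1, pg.2) from by
          rw [(Finset.mem_filter.mp hEF).2, hpg])
        exact ⟨(a, b), fun _ => hab⟩
      · exact ⟨(p0.1.2, p0.1.2), fun h => absurd h hEF⟩
    choose dq hdec using hdec0
    have hFeB : ∀ E ∈ Fe, E ∈ B := fun E hE => hBhB E (Finset.mem_filter.mp hE).1
    have key1 : ∀ E₁ ∈ Fe, ∀ E₂ ∈ Fe, E₁ ≠ E₂ →
        (dq E₁).1 = (dq E₂).1 ∨ (dq E₁).2 = (dq E₂).2 := by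
      intro E₁ h1 E₂ h2 hne12
      have hx : ((pg.1, (dq E₁).1) : V × W) ∈ E₁ := by
        have := Sym2.mem_mk_left ((pg.1, (dq E₁).1) : V × W) (pg.2, (dq E₁).2)
        rwa [← hdec E₁ h1] at this
      have hy : ((pg.2, (dq E₂).2) : V × W) ∈ E₂ := by
        have := Sym2.mem_mk_right ((pg.1, (dq E₂).1) : V × W) (pg.2, (dq E₂).2)
        rwa [← hdec E₂ h2] at this
      rcases hB.2 E₁ (by exact_mod_cast hFeB E₁ h1) E₂ (by exact_mod_cast hFeB E₂ h2)
        hne12 _ hx _ hy (Or.inl hGgg) with h | h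
      · rw [hdec E₁ h1, Sym2.eq_iff] at h
        rcases h with ⟨_, h2'⟩ | ⟨h1', _⟩
        · right
          have := (Prod.mk.injEq _ _ _ _).mp h2'
          exact this.2.symm
        · exact absurd ((Prod.mk.injEq _ _ _ _).mp h1').1 hgg
      · rw [hdec E₂ h2, Sym2.eq_iff] at h
        rcases h with ⟨h1', _⟩ | ⟨_, h2'⟩
        · left
          exact ((Prod.mk.injEq _ _ _ _).mp h1').2
        · exact absurd ((Prod.mk.injEq _ _ _ _).mp h2').1.symm hgg
    have key2 : ∀ E₁ ∈ Fe, ∀ E₂ ∈ Fe,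
        ¬ H.Adj (dq E₁).1 (dq E₂).1 ∧ ¬ H.Adj (dq E₁).2 (dq E₂).2 := by
      intro E₁ h1 E₂ h2
      by_cases hne12 : E₁ = E₂
      · subst hne12; exact ⟨H.loopless.irrefl _, H.loopless.irrefl _⟩
      constructor
      · intro hadj
        have hx : ((pg.1, (dq E₁).1) : V × W) ∈ E₁ := by
          have := Sym2.mem_mk_left ((pg.1, (dq E₁).1) : V × W) (pg.2, (dq E₁).2)
          rwa [← hdec E₁ h1] at this
        have hy : ((pg.1, (dq E₂).1) : V × W) ∈ E₂ := by
          have := Sym2.mem_mk_left ((pg.1, (dq E₂).1) : V × W) (pg.2, (dq E₂).2)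
          rwa [← hdec E₂ h2] at this
        rcases hB.2 E₁ (by exact_mod_cast hFeB E₁ h1) E₂ (by exact_mod_cast hFeB E₂ h2)
          hne12 _ hx _ hy (Or.inr ⟨rfl, hadj⟩) with h | h
        · rw [hdec E₁ h1, Sym2.eq_iff] at h
          rcases h with ⟨_, h'⟩ | ⟨h', _⟩ <;>
            exact hgg ((Prod.mk.injEq _ _ _ _).mp h').1
        · rw [hdec E₂ h2, Sym2.eq_iff] at h
          rcases h with ⟨_, h'⟩ | ⟨h', _⟩ <;>
            exact hgg ((Prod.mk.injEq _ _ _ _).mp h').1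
      · intro hadj
        have hx : ((pg.2, (dq E₁).2) : V × W) ∈ E₁ := by
          have := Sym2.mem_mk_right ((pg.1, (dq E₁).1) : V × W) (pg.2, (dq E₁).2)
          rwa [← hdec E₁ h1] at this
        have hy : ((pg.2, (dq E₂).2) : V × W) ∈ E₂ := by
          have := Sym2.mem_mk_right ((pg.1, (dq E₂).1) : V × W) (pg.2, (dq E₂).2)
          rwa [← hdec E₂ h2] at this
        rcases hB.2 E₁ (by exact_mod_cast hFeB E₁ h1) E₂ (by exact_mod_cast hFeB E₂ h2)
          hne12 _ hx _ hy (Or.inr ⟨rfl, hadj⟩) with h | h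
        · rw [hdec E₁ h1, Sym2.eq_iff] at h
          rcases h with ⟨h', _⟩ | ⟨_, h'⟩
          · exact hgg ((Prod.mk.injEq _ _ _ _).mp h').1.symm
          · exact hgg ((Prod.mk.injEq _ _ _ _).mp h').1.symm
        · rw [hdec E₂ h2, Sym2.eq_iff] at h
          rcases h with ⟨h', _⟩ | ⟨_, h'⟩
          · exact hgg ((Prod.mk.injEq _ _ _ _).mp h').1.symm
          · exact hgg ((Prod.mk.injEq _ _ _ _).mp h').1.symm
    suffices hsuf : ∃ t : Sym2 (V × W) → W, Set.InjOn t ↑Fe ∧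
        ∀ E₁ ∈ Fe, ∀ E₂ ∈ Fe, ¬ H.Adj (t E₁) (t E₂) by
      obtain ⟨t, htinj, htind⟩ := hsuf
      calc Fe.card = (Fe.image t).card := (Finset.card_image_of_injOn htinj).symm
        _ ≤ _root_.indepNum H := le_indepNum (by
            intro x hx y hy
            obtain ⟨E₁, h1, rfl⟩ := Finset.mem_image.mp hx
            obtain ⟨E₂, h2, rfl⟩ := Finset.mem_image.mp hy
            exact htind E₁ h1 E₂ h2)
    by_cases hall : ∀ E₁ ∈ Fe, ∀ E₂ ∈ Fe, (dq E₁).2 = (dq E₂).2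
    · refine ⟨fun E => (dq E).1, ?_, fun E₁ h1 E₂ h2 => (key2 E₁ h1 E₂ h2).1⟩
      intro E₁ h1 E₂ h2 heq
      have m1 : E₁ ∈ Fe := by exact_mod_cast h1
      have m2 : E₂ ∈ Fe := by exact_mod_cast h2
      have heq' : (dq E₁).1 = (dq E₂).1 := heq
      rw [hdec E₁ m1, hdec E₂ m2, heq', hall E₁ m1 E₂ m2]
    · push_neg at hall
      obtain ⟨Ex, hmx, Ey, hmy, hdbne⟩ := hall
      have hExy : Ex ≠ Ey := fun h => hdbne (by rw [h])
      have hda12 : (dq Ex).1 = (dq Ey).1 := by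
        rcases key1 Ex hmx Ey hmy hExy with h | h
        · exact h
        · exact absurd h hdbne
      have hdaall : ∀ E ∈ Fe, (dq E).1 = (dq Ex).1 := by
        intro E hE
        by_cases h1 : E = Ex
        · rw [h1]
        by_cases h2 : E = Ey
        · rw [h2, ← hda12]
        rcases key1 E hE Ex hmx h1 with h | h
        · exact h
        · rcases key1 E hE Ey hmy h2 with h' | h'
          · rw [h', ← hda12]
          · exact absurd (h.symm.trans h') hdbne
      refine ⟨fun E => (dq E).2, ?_, fun E₁ h1 E₂ h2 => (key2 E₁ h1 E₂ h2).2⟩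
      intro E₁ h1 E₂ h2 heq
      have m1 : E₁ ∈ Fe := by exact_mod_cast h1
      have m2 : E₂ ∈ Fe := by exact_mod_cast h2
      have heq' : (dq E₁).2 = (dq E₂).2 := heq
      rw [hdec E₁ m1, hdec E₂ m2, heq', hdaall E₁ m1, hdaall E₂ m2]
  -- vertical part
  have hvdec0 : ∀ E : Sym2 (V × W), ∃ r : V × W × W,
      E ∈ Bv → (E = s((r.1, r.2.1), (r.1, r.2.2)) ∧ H.Adj r.2.1 r.2.2) := by
    intro E
    by_cases hEv : E ∈ Bv
    · obtain ⟨hEB, hEd⟩ := Finset.mem_filter.mp hEv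
      obtain ⟨p, hp⟩ := sym2_decomp E
      rw [hp, Sym2.map_pair_eq, Sym2.mk_isDiag_iff] at hEd
      have hedge := hB.1 (show E ∈ ↑B from hEB)
      rw [hp, SimpleGraph.mem_edgeSet] at hedge
      have hH : H.Adj p.1.2 p.2.2 := by
        rcases hedge with h | ⟨_, h⟩
        · rw [hEd] at h; exact absurd h (G.loopless.irrefl _)
        · exact h
      refine ⟨(p.1.1, p.1.2, p.2.2), fun _ => ⟨?_, hH⟩⟩
      rw [hp]
      exact (congrArg (fun z => s(p.1, (z, p.2.2))) hEd).symm
    · exact ⟨(p0.1.1, p0.1.2, p0.1.2), fun h => absurd h hEv⟩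
  choose vr hvdec using hvdec0
  set D : Finset V := Bv.image (fun E => (vr E).1) with hD
  have hBvcard : Bv.card ≤ D.card * eopNum H := by
    have hmaps : ∀ E ∈ Bv, (vr E).1 ∈ D := fun E hE => Finset.mem_image_of_mem _ hE
    rw [Finset.card_eq_sum_card_fiberwise hmaps]
    refine le_trans (Finset.sum_le_card_nsmul D _ (eopNum H) ?_) (by rw [smul_eq_mul])
    intro g hg
    set Fg := Bv.filter (fun a => (vr a).1 = g) with hFg
    have hFgB : ∀ E ∈ Fg, E ∈ Bv := fun E hE => (Finset.mem_filter.mp hE).1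
    have hFgdec : ∀ E ∈ Fg, E = s((g, (vr E).2.1), (g, (vr E).2.2)) := by
      intro E hE
      have h := (hvdec E (hFgB E hE)).1
      rwa [(Finset.mem_filter.mp hE).2] at h
    have hinjg : Set.InjOn (Sym2.map (Prod.snd : V × W → W)) ↑Fg := by
      intro E₁ h1 E₂ h2 heq
      have m1 : E₁ ∈ Fg := by exact_mod_cast h1
      have m2 : E₂ ∈ Fg := by exact_mod_cast h2
      rw [hFgdec E₁ m1, hFgdec E₂ m2]
      rw [hFgdec E₁ m1, hFgdec E₂ m2, Sym2.map_pair_eq, Sym2.map_pair_eq] at heq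
      simp only [Sym2.eq_iff] at heq ⊢
      rcases heq with ⟨ha, hb⟩ | ⟨ha, hb⟩
      · left; constructor <;> rw [Prod.ext_iff] <;> simp [ha, hb]
      · right; constructor <;> rw [Prod.ext_iff] <;> simp [ha, hb]
    have hEOPg : IsEOPSet H ↑(Fg.image (Sym2.map (Prod.snd : V × W → W))) := by
      constructor
      · intro f hf
        simp only [Finset.coe_image, Set.mem_image, Finset.mem_coe] at hf
        obtain ⟨E, hE, rfl⟩ := hf
        have h := hFgdec E hE
        rw [h, Sym2.map_pair_eq, SimpleGraph.mem_edgeSet]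
        have := (hvdec E (hFgB E hE)).2
        exact this
      · intro f₁ hf₁ f₂ hf₂ hne p hp q hq hadj
        simp only [Finset.coe_image, Set.mem_image, Finset.mem_coe] at hf₁ hf₂
        obtain ⟨E₁, h1, rfl⟩ := hf₁
        obtain ⟨E₂, h2, rfl⟩ := hf₂
        have hEne : E₁ ≠ E₂ := fun h => hne (by rw [h])
        have hgp : ((g, p) : V × W) ∈ E₁ := by
          rw [hFgdec E₁ h1]
          rw [hFgdec E₁ h1, Sym2.map_pair_eq, Sym2.mem_iff] at hp
          rcases hp with rfl | rfl
          · exact Sym2.mem_mk_left _ _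
          · exact Sym2.mem_mk_right _ _
        have hgq : ((g, q) : V × W) ∈ E₂ := by
          rw [hFgdec E₂ h2]
          rw [hFgdec E₂ h2, Sym2.map_pair_eq, Sym2.mem_iff] at hq
          rcases hq with rfl | rfl
          · exact Sym2.mem_mk_left _ _
          · exact Sym2.mem_mk_right _ _
        rcases hB.2 E₁ (by exact_mod_cast hBvB E₁ (hFgB E₁ h1))
          E₂ (by exact_mod_cast hBvB E₂ (hFgB E₂ h2)) hEne _ hgp _ hgq
          (Or.inr ⟨rfl, hadj⟩) with h | h
        · left
          have := congrArg (Sym2.map (Prod.snd : V × W → W)) h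
          rwa [Sym2.map_pair_eq] at this
        · right
          have := congrArg (Sym2.map (Prod.snd : V × W → W)) h
          rwa [Sym2.map_pair_eq] at this
    calc Fg.card = (Fg.image (Sym2.map (Prod.snd : V × W → W))).card :=
          (Finset.card_image_of_injOn hinjg).symm
      _ ≤ eopNum H := le_eopNum hEOPg
  -- properties of D
  have hP2 : ∀ g ∈ D, ∀ E ∈ Bh, ∀ x ∈ E, ¬ G.Adj g x.1 ∧ g ≠ x.1 := by
    intro g hg E hE
    obtain ⟨F, hFv, rfl⟩ := Finset.mem_image.mp hg
    obtain ⟨hFdec, hFH⟩ := hvdec F hFv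
    have hne0 : F ≠ E := by
      intro h
      exact (Finset.mem_filter.mp hE).2 (h ▸ (Finset.mem_filter.mp hFv).2)
    have hxa : (((vr F).1, (vr F).2.1) : V × W) ∈ F := by
      have := Sym2.mem_mk_left (((vr F).1, (vr F).2.1) : V × W) ((vr F).1, (vr F).2.2)
      rwa [← hFdec] at this
    have hxb : (((vr F).1, (vr F).2.2) : V × W) ∈ F := by
      have := Sym2.mem_mk_right (((vr F).1, (vr F).2.1) : V × W) ((vr F).1, (vr F).2.2)
      rwa [← hFdec] at this
    have hnadj : ∀ x ∈ E, ¬ G.Adj (vr F).1 x.1 := by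
      intro x hx hadj
      rcases hB.2 F (by exact_mod_cast hBvB F hFv) E (by exact_mod_cast hBhB E hE)
        hne0 _ hxa x hx (Or.inl hadj) with h | h
      · have hxF : x ∈ F := h ▸ Sym2.mem_mk_right _ _
        rw [hFdec, Sym2.mem_iff] at hxF
        rcases hxF with h' | h' <;> · rw [h'] at hadj; exact G.loopless.irrefl _ hadj
      · have hin1 : (((vr F).1, (vr F).2.1) : V × W) ∈ E := h ▸ Sym2.mem_mk_left _ _
        rcases hB.2 F (by exact_mod_cast hBvB F hFv) E (by exact_mod_cast hBhB E hE)
          hne0 _ hxb x hx (Or.inl hadj) with h2 | h2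
        · have hxF : x ∈ F := h2 ▸ Sym2.mem_mk_right _ _
          rw [hFdec, Sym2.mem_iff] at hxF
          rcases hxF with h' | h' <;> · rw [h'] at hadj; exact G.loopless.irrefl _ hadj
        · have hin2 : (((vr F).1, (vr F).2.2) : V × W) ∈ E := h2 ▸ Sym2.mem_mk_left _ _
          have hnevw : (((vr F).1, (vr F).2.1) : V × W) ≠ ((vr F).1, (vr F).2.2) := by
            intro hq
            exact H.ne_of_adj hFH (congrArg Prod.snd hq)
          exact hne0 (hFdec.trans (sym2_eq_of_mem_mem hnevw hin1 hin2).symm)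
    intro x hx
    refine ⟨hnadj x hx, ?_⟩
    intro hgx
    obtain ⟨p, hp⟩ := sym2_decomp E
    have hEedge := hB.1 (show E ∈ ↑B from hBhB E hE)
    rw [hp, SimpleGraph.mem_edgeSet] at hEedge
    have hndiag : p.1.1 ≠ p.2.1 := by
      have := (Finset.mem_filter.mp hE).2
      rwa [hp, Sym2.map_pair_eq, Sym2.mk_isDiag_iff] at this
    have hGadj : G.Adj p.1.1 p.2.1 := by
      rcases hEedge with h | ⟨h, _⟩
      · exact h
      · exact absurd h hndiag
    rw [hp, Sym2.mem_iff] at hx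
    rcases hx with h | h
    · refine hnadj p.2 ?_ ?_
      · rw [hp]; exact Sym2.mem_mk_right _ _
      · rw [hgx, h]; exact hGadj
    · refine hnadj p.1 ?_ ?_
      · rw [hp]; exact Sym2.mem_mk_left _ _
      · rw [hgx, h]; exact hGadj.symm
  have hDind : ∀ g₁ ∈ D, ∀ g₂ ∈ D, ¬ G.Adj g₁ g₂ := by
    intro g₁ hg₁ g₂ hg₂ hadj
    obtain ⟨E₁, hE₁, rfl⟩ := Finset.mem_image.mp hg₁
    obtain ⟨E₂, hE₂, rfl⟩ := Finset.mem_image.mp hg₂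
    obtain ⟨hd1, hH1⟩ := hvdec E₁ hE₁
    obtain ⟨hd2, hH2⟩ := hvdec E₂ hE₂
    have hne12 : (vr E₁).1 ≠ (vr E₂).1 := G.ne_of_adj hadj
    have hEne : E₁ ≠ E₂ := fun h => hne12 (by rw [h])
    have hx : (((vr E₁).1, (vr E₁).2.1) : V × W) ∈ E₁ := by
      have := Sym2.mem_mk_left (((vr E₁).1, (vr E₁).2.1) : V × W) ((vr E₁).1, (vr E₁).2.2)
      rwa [← hd1] at this
    have hy : (((vr E₂).1, (vr E₂).2.1) : V × W) ∈ E₂ := by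
      have := Sym2.mem_mk_left (((vr E₂).1, (vr E₂).2.1) : V × W) ((vr E₂).1, (vr E₂).2.2)
      rwa [← hd2] at this
    rcases hB.2 E₁ (by exact_mod_cast hBvB E₁ hE₁) E₂ (by exact_mod_cast hBvB E₂ hE₂)
      hEne _ hx _ hy (Or.inl hadj) with h | h
    · have hm : (((vr E₂).1, (vr E₂).2.1) : V × W) ∈ E₁ := h ▸ Sym2.mem_mk_right _ _
      rw [hd1, Sym2.mem_iff] at hm
      rcases hm with h' | h' <;> exact hne12 (congrArg (Prod.fst : V × W → V) h').symm
    · have hm : (((vr E₁).1, (vr E₁).2.1) : V × W) ∈ E₂ := h ▸ Sym2.mem_mk_left _ _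
      rw [hd2, Sym2.mem_iff] at hm
      rcases hm with h' | h' <;> exact hne12 (congrArg (Prod.fst : V × W → V) h')
  obtain ⟨SC, hSCind, hSCcard, hSCsupp⟩ := eop_indep hCEOP
  have hDdisj : Disjoint D SC := by
    rw [Finset.disjoint_left]
    intro g hgD hgS
    obtain ⟨e, heC, hge⟩ := hSCsupp g hgS
    obtain ⟨E, hE, rfl⟩ := Finset.mem_image.mp heC
    obtain ⟨x, hxE, hxg⟩ := Sym2.mem_map.mp hge
    exact (hP2 g hgD E hE x hxE).2 hxg.symm
  have hA : ∀ x ∈ D ∪ SC, ∀ y ∈ D ∪ SC, ¬ G.Adj x y := by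
    intro x hx y hy hadj
    rcases Finset.mem_union.mp hx with hx' | hx' <;> rcases Finset.mem_union.mp hy with hy' | hy'
    · exact hDind x hx' y hy' hadj
    · obtain ⟨e, heC, hye⟩ := hSCsupp y hy'
      obtain ⟨E, hE, rfl⟩ := Finset.mem_image.mp heC
      obtain ⟨z, hzE, hzy⟩ := Sym2.mem_map.mp hye
      exact (hP2 x hx' E hE z hzE).1 (by rw [hzy]; exact hadj)
    · obtain ⟨e, heC, hxe⟩ := hSCsupp x hx'
      obtain ⟨E, hE, rfl⟩ := Finset.mem_image.mp heC
      obtain ⟨z, hzE, hzx⟩ := Sym2.mem_map.mp hxe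
      exact (hP2 y hy' E hE z hzE).1 (by rw [hzx]; exact hadj.symm)
    · exact hSCind x hx' y hy' hadj
  have hcard2 : D.card + C.card ≤ _root_.indepNum G := by
    rw [← hSCcard, ← Finset.card_union_of_disjoint hDdisj]
    exact le_indepNum hA
  have hCle : C.card ≤ eopNum G := le_eopNum hCEOP
  have hHle : eopNum H ≤ _root_.indepNum H := eopNum_le_indepNum H
  have hGle : eopNum G ≤ _root_.indepNum G := eopNum_le_indepNum G
  obtain ⟨u, hu⟩ := Nat.exists_eq_add_of_le hCle
  obtain ⟨t, ht⟩ := Nat.exists_eq_add_of_le hGle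
  have hdle : D.card ≤ u + t := by omega
  calc B.card = Bh.card + Bv.card := by omega
    _ ≤ C.card * _root_.indepNum H + D.card * eopNum H := add_le_add hBhcard hBvcard
    _ ≤ eopNum G * _root_.indepNum H + eopNum H * (_root_.indepNum G - eopNum G) := by
        rw [ht, hu, Nat.add_sub_cancel_left]
        nlinarith [Nat.mul_le_mul hdle (le_refl (eopNum H)),
          Nat.mul_le_mul (le_refl u) hHle]

end UpperBound
/-- For arbitrary graphs `G` and `H`,
`ρₑᵒ(G)·α(H) ≤ ρₑᵒ(G ∘ H) ≤ ρₑᵒ(G)·α(H) + ρₑᵒ(H)·(α(G) − ρₑᵒ(G))`. -/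
theorem stmt_7 {V W : Type*} [Fintype V] [Fintype W]
    (G : SimpleGraph V) (H : SimpleGraph W) :
    eopNum G * _root_.indepNum H ≤ eopNum (lexProd G H) ∧
    eopNum (lexProd G H) ≤ eopNum G * _root_.indepNum H + eopNum H * (_root_.indepNum G - eopNum G) := by
  exact ⟨lower_bound G H, upper_bound G H⟩
end

section
/- For arbitrary graphs G and H, ρ_e^o(G □ H) ≥ max{ ρ_e^o(G)·α(H), α(G)·ρ_e^o(H) }, where □ denotes the Cartesian product. -/
open SimpleGraph

lemma eop_bdd {V : Type*} [Fintype V] (G : SimpleGraph V) :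
    BddAbove {n | ∃ B : Finset (Sym2 V), IsEOPSet G ↑B ∧ B.card = n} := by
  classical
  exact ⟨Fintype.card (Sym2 V), by rintro n ⟨B, -, rfl⟩; exact B.card_le_univ⟩

lemma eop_nonempty {V : Type*} (G : SimpleGraph V) :
    {n | ∃ B : Finset (Sym2 V), IsEOPSet G ↑B ∧ B.card = n}.Nonempty := by
  refine ⟨0, ∅, ⟨?_, ?_⟩, rfl⟩ <;> simp [IsEOPSet]

lemma exists_max_eop {V : Type*} [Fintype V] (G : SimpleGraph V) :
    ∃ B : Finset (Sym2 V), IsEOPSet G ↑B ∧ B.card = eopNum G :=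
  Nat.sSup_mem (eop_nonempty G) (eop_bdd G)

lemma exists_max_indep {V : Type*} [Fintype V] (G : SimpleGraph V) :
    ∃ S : Finset V, (∀ x ∈ S, ∀ y ∈ S, ¬ G.Adj x y) ∧ S.card = _root_.indepNum G :=
  Nat.sSup_mem (s := {n | ∃ S : Finset V, (∀ x ∈ S, ∀ y ∈ S, ¬ G.Adj x y) ∧ S.card = n})
    ⟨0, ∅, by simp, rfl⟩
    ⟨Fintype.card V, by rintro n ⟨S, -, rfl⟩; exact S.card_le_univ⟩

lemma eopNum_ge {V : Type*} [Fintype V] (G : SimpleGraph V)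
    (B : Finset (Sym2 V)) (hB : IsEOPSet G ↑B) : B.card ≤ eopNum G :=
  le_csSup (eop_bdd G) ⟨B, hB, rfl⟩

lemma key_left {V W : Type*} [Fintype V] [Fintype W]
    (G : SimpleGraph V) (H : SimpleGraph W)
    (B : Finset (Sym2 V)) (hB : IsEOPSet G ↑B)
    (S : Finset W) (hS : ∀ x ∈ S, ∀ y ∈ S, ¬ H.Adj x y) :
    B.card * S.card ≤ eopNum (G.boxProd H) := by
  classical
  set F : Sym2 V × W → Sym2 (V × W) := fun p => p.1.map (fun v => (v, p.2)) with hF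
  have hinj : Set.InjOn F ↑(B ×ˢ S) := by
    rintro ⟨e₁, s₁⟩ - ⟨e₂, s₂⟩ - h
    induction e₁ using Sym2.ind with | _ a b =>
    have hmem : ((a, s₁) : V × W) ∈ F (e₂, s₂) := by
      rw [← h]; exact Sym2.mem_map.mpr ⟨a, Sym2.mem_mk_left a b, rfl⟩
    obtain ⟨c, -, hc⟩ := Sym2.mem_map.mp hmem
    have hs : s₁ = s₂ := (Prod.mk.injEq _ _ _ _ ▸ hc).2.symm
    subst hs
    have : e₂ = s(a, b) := by
      have hinj2 : Function.Injective (fun v : V => (v, s₁)) := by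
        intro x y hxy; exact (Prod.mk.injEq _ _ _ _ ▸ hxy).1
      exact (Sym2.map.injective hinj2 h.symm)
    simp [this]
  have hcard : ((B ×ˢ S).image F).card = B.card * S.card := by
    rw [Finset.card_image_of_injOn hinj, Finset.card_product]
  rw [← hcard]
  apply eopNum_ge
  constructor
  · intro e he
    simp only [Finset.coe_image, Set.mem_image, Finset.mem_coe, Finset.mem_product] at he
    obtain ⟨⟨f, s⟩, ⟨hf, hs⟩, rfl⟩ := he
    induction f using Sym2.ind with | _ a b =>
    have hab : G.Adj a b := hB.1 (Finset.mem_coe.mpr hf)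
    simp only [hF, Sym2.map_pair_eq, mem_edgeSet, boxProd_adj]
    exact Or.inl ⟨hab, trivial⟩
  · intro e₁ he₁ e₂ he₂ hne x hx y hy hadj
    simp only [Finset.coe_image, Set.mem_image, Finset.mem_coe, Finset.mem_product] at he₁ he₂
    obtain ⟨⟨f₁, s₁⟩, ⟨hf₁, hs₁⟩, rfl⟩ := he₁
    obtain ⟨⟨f₂, s₂⟩, ⟨hf₂, hs₂⟩, rfl⟩ := he₂
    obtain ⟨a, ha, rfl⟩ := Sym2.mem_map.mp hx
    obtain ⟨b, hb, rfl⟩ := Sym2.mem_map.mp hy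
    rw [boxProd_adj] at hadj
    rcases hadj with ⟨hG, hs⟩ | ⟨hH, -⟩
    · simp only at hG hs
      subst hs
      have hfne : f₁ ≠ f₂ := by rintro rfl; exact hne rfl
      have := hB.2 f₁ (Finset.mem_coe.mpr hf₁) f₂ (Finset.mem_coe.mpr hf₂) hfne
        a ha b hb hG
      rcases this with h | h
      · left
        have : s((a, s₁), (b, s₁)) = Sym2.map (fun v => (v, s₁)) s(a, b) := by
          simp [Sym2.map_pair_eq]
        rw [this, h]
      · right
        have : s((a, s₁), (b, s₁)) = Sym2.map (fun v => (v, s₁)) s(a, b) := by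
          simp [Sym2.map_pair_eq]
        rw [this, h]
    · exact absurd hH (hS s₁ hs₁ s₂ hs₂)

lemma key_right {V W : Type*} [Fintype V] [Fintype W]
    (G : SimpleGraph V) (H : SimpleGraph W)
    (S : Finset V) (hS : ∀ x ∈ S, ∀ y ∈ S, ¬ G.Adj x y)
    (B : Finset (Sym2 W)) (hB : IsEOPSet H ↑B) :
    S.card * B.card ≤ eopNum (G.boxProd H) := by
  classical
  set F : Sym2 W × V → Sym2 (V × W) := fun p => p.1.map (fun w => (p.2, w)) with hF
  have hinj : Set.InjOn F ↑(B ×ˢ S) := by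
    rintro ⟨e₁, s₁⟩ - ⟨e₂, s₂⟩ - h
    induction e₁ using Sym2.ind with | _ a b =>
    have hmem : ((s₁, a) : V × W) ∈ F (e₂, s₂) := by
      rw [← h]; exact Sym2.mem_map.mpr ⟨a, Sym2.mem_mk_left a b, rfl⟩
    obtain ⟨c, -, hc⟩ := Sym2.mem_map.mp hmem
    have hs : s₁ = s₂ := (Prod.mk.injEq _ _ _ _ ▸ hc).1.symm
    subst hs
    have : e₂ = s(a, b) := by
      have hinj2 : Function.Injective (fun w : W => (s₁, w)) := by
        intro x y hxy; exact (Prod.mk.injEq _ _ _ _ ▸ hxy).2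
      exact (Sym2.map.injective hinj2 h.symm)
    simp [this]
  have hcard : ((B ×ˢ S).image F).card = S.card * B.card := by
    rw [Finset.card_image_of_injOn hinj, Finset.card_product, Nat.mul_comm]
  rw [← hcard]
  apply eopNum_ge
  constructor
  · intro e he
    simp only [Finset.coe_image, Set.mem_image, Finset.mem_coe, Finset.mem_product] at he
    obtain ⟨⟨f, s⟩, ⟨hf, hs⟩, rfl⟩ := he
    induction f using Sym2.ind with | _ a b =>
    have hab : H.Adj a b := hB.1 (Finset.mem_coe.mpr hf)
    simp only [hF, Sym2.map_pair_eq, mem_edgeSet, boxProd_adj]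
    exact Or.inr ⟨hab, trivial⟩
  · intro e₁ he₁ e₂ he₂ hne x hx y hy hadj
    simp only [Finset.coe_image, Set.mem_image, Finset.mem_coe, Finset.mem_product] at he₁ he₂
    obtain ⟨⟨f₁, s₁⟩, ⟨hf₁, hs₁⟩, rfl⟩ := he₁
    obtain ⟨⟨f₂, s₂⟩, ⟨hf₂, hs₂⟩, rfl⟩ := he₂
    obtain ⟨a, ha, rfl⟩ := Sym2.mem_map.mp hx
    obtain ⟨b, hb, rfl⟩ := Sym2.mem_map.mp hy
    rw [boxProd_adj] at hadj
    rcases hadj with ⟨hG, -⟩ | ⟨hH, hs⟩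
    · exact absurd hG (hS s₁ hs₁ s₂ hs₂)
    · simp only at hH hs
      subst hs
      have hfne : f₁ ≠ f₂ := by rintro rfl; exact hne rfl
      have := hB.2 f₁ (Finset.mem_coe.mpr hf₁) f₂ (Finset.mem_coe.mpr hf₂) hfne
        a ha b hb hH
      rcases this with h | h
      · left
        have : s((s₁, a), (s₁, b)) = Sym2.map (fun w => (s₁, w)) s(a, b) := by
          simp [Sym2.map_pair_eq]
        rw [this, h]
      · right
        have : s((s₁, a), (s₁, b)) = Sym2.map (fun w => (s₁, w)) s(a, b) := by
          simp [Sym2.map_pair_eq]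
        rw [this, h]

/-- For arbitrary graphs `G` and `H`, `ρₑᵒ(G □ H) ≥ max{ρₑᵒ(G)·α(H), α(G)·ρₑᵒ(H)}`. -/
theorem stmt_14 {V W : Type*} [Fintype V] [Fintype W]
    (G : SimpleGraph V) (H : SimpleGraph W) :
    max (eopNum G * _root_.indepNum H) (_root_.indepNum G * eopNum H) ≤ eopNum (G.boxProd H) := by
  apply max_le
  · obtain ⟨B, hB, hBc⟩ := exists_max_eop G
    obtain ⟨S, hS, hSc⟩ := exists_max_indep H
    rw [← hBc, ← hSc]
    exact key_left G H B hB S hS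
  · obtain ⟨S, hS, hSc⟩ := exists_max_indep G
    obtain ⟨B, hB, hBc⟩ := exists_max_eop H
    rw [← hSc, ← hBc]
    exact key_right G H S hS B hB
end
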